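/- The map (0,1) ∋ a ↦ g_a ∈ H^∞(Δ) is continuous in the supremum norm, where g_a(z) = (z/(1+z))·tanh(az) on the angular domain Δ = {z : |Arg z| < π/4}. -/

import Mathlib

set_option maxHeartbeats 1000000

lemma cosh_re' (w : ℂ) : (Complex.cosh w).re = Real.cosh w.re * Real.cos w.im := by
  conv_lhs => rw [← Complex.re_add_im w]
  rw [Complex.cosh_add, Complex.cosh_mul_I, Complex.sinh_mul_I]
  simp [← Complex.ofReal_cosh, ← Complex.ofReal_sinh, ← Complex.ofReal_cos, ← Complex.ofReal_sin]

lemma cosh_im' (w : ℂ) : (Complex.cosh w).im = Real.sinh w.re * Real.sin w.im := by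
  conv_lhs => rw [← Complex.re_add_im w]
  rw [Complex.cosh_add, Complex.cosh_mul_I, Complex.sinh_mul_I]
  simp [← Complex.ofReal_cosh, ← Complex.ofReal_sinh, ← Complex.ofReal_cos, ← Complex.ofReal_sin]

lemma sinh_re' (w : ℂ) : (Complex.sinh w).re = Real.sinh w.re * Real.cos w.im := by
  conv_lhs => rw [← Complex.re_add_im w]
  rw [Complex.sinh_add, Complex.cosh_mul_I, Complex.sinh_mul_I]
  simp [← Complex.ofReal_cosh, ← Complex.ofReal_sinh, ← Complex.ofReal_cos, ← Complex.ofReal_sin]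

lemma sinh_im' (w : ℂ) : (Complex.sinh w).im = Real.cosh w.re * Real.sin w.im := by
  conv_lhs => rw [← Complex.re_add_im w]
  rw [Complex.sinh_add, Complex.cosh_mul_I, Complex.sinh_mul_I]
  simp [← Complex.ofReal_cosh, ← Complex.ofReal_sinh, ← Complex.ofReal_cos, ← Complex.ofReal_sin]

/-- `|cosh w|² = sinh²(Re w) + cos²(Im w)` -/
lemma normSq_cosh' (w : ℂ) :
    Complex.normSq (Complex.cosh w) = Real.sinh w.re ^ 2 + Real.cos w.im ^ 2 := by
  rw [Complex.normSq_apply, cosh_re', cosh_im']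
  have h1 := Real.cosh_sq w.re
  have h2 := Real.sin_sq_add_cos_sq w.im
  nlinarith

/-- Lower bound on `‖cosh w‖` in the sector. -/
lemma cosh_lower (w : ℂ) (h : |w.im| ≤ w.re) : Real.exp w.re ≤ 4 * ‖Complex.cosh w‖ := by
  have hx : 0 ≤ w.re := le_trans (abs_nonneg _) h
  have hsq : ‖Complex.cosh w‖ ^ 2 = Real.sinh w.re ^ 2 + Real.cos w.im ^ 2 := by
    rw [Complex.sq_norm, normSq_cosh']
  have hsin : |Real.sin w.im| ≤ Real.sinh w.re := by
    calc |Real.sin w.im| ≤ |w.im| := Real.abs_sin_le_abs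
    _ ≤ w.re := h
    _ ≤ Real.sinh w.re := Real.self_le_sinh_iff.mpr hx
  have hone : 1 ≤ ‖Complex.cosh w‖ := by
    have h2 := Real.sin_sq_add_cos_sq w.im
    nlinarith [norm_nonneg (Complex.cosh w), sq_abs (Real.sin w.im), sq_abs (Real.sinh w.re),
      abs_nonneg (Real.sin w.im)]
  have hsinh : Real.sinh w.re ≤ ‖Complex.cosh w‖ := by
    nlinarith [Real.sinh_nonneg_iff.mpr hx, norm_nonneg (Complex.cosh w), sq_nonneg (Real.cos w.im)]
  by_cases hc : Real.exp w.re ≤ 4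
  · linarith
  · push_neg at hc
    have h4 : Real.exp w.re ≤ 4 * Real.sinh w.re := by
      rw [Real.sinh_eq]
      have : Real.exp (-w.re) ≤ 1 := Real.exp_le_one_iff.mpr (by linarith)
      linarith
    linarith

/-- Upper bound on `‖sinh w‖` in the sector. -/
lemma sinh_upper (w : ℂ) (h : |w.im| ≤ w.re) : ‖Complex.sinh w‖ ≤ 2 * w.re * Real.exp w.re := by
  have hx : 0 ≤ w.re := le_trans (abs_nonneg _) h
  have hle : ‖Complex.sinh w‖ ≤ |(Complex.sinh w).re| + |(Complex.sinh w).im| :=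
    Complex.norm_le_abs_re_add_abs_im _
  rw [sinh_re', sinh_im'] at hle
  have hsinh : Real.sinh w.re ≤ w.re * Real.exp w.re := by
    rw [Real.sinh_eq]
    have := Real.add_one_le_exp (-(2 * w.re))
    have he : Real.exp (-(2 * w.re)) = Real.exp (-w.re) * Real.exp (-w.re) := by
      rw [← Real.exp_add]; ring_nf
    have hpos := Real.exp_pos w.re
    have hinv : Real.exp (-w.re) * Real.exp w.re = 1 := by
      rw [← Real.exp_add]; simp
    nlinarith [Real.exp_pos (-w.re)]
  have hcosh : Real.cosh w.re ≤ Real.exp w.re := by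
    rw [Real.cosh_eq]
    have := (Real.exp_le_one_iff (x := -w.re)).mpr (by linarith)
    have := Real.exp_pos w.re
    nlinarith [Real.one_le_exp hx]
  have h1 : |Real.sinh w.re * Real.cos w.im| ≤ w.re * Real.exp w.re := by
    rw [abs_mul, abs_of_nonneg (Real.sinh_nonneg_iff.mpr hx)]
    calc Real.sinh w.re * |Real.cos w.im| ≤ Real.sinh w.re * 1 :=
      mul_le_mul_of_nonneg_left (Real.abs_cos_le_one _) (Real.sinh_nonneg_iff.mpr hx)
    _ ≤ w.re * Real.exp w.re := by rw [mul_one]; exact hsinh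
  have h2 : |Real.cosh w.re * Real.sin w.im| ≤ w.re * Real.exp w.re := by
    rw [abs_mul, abs_of_nonneg (Real.cosh_pos _).le]
    have : Real.cosh w.re * |Real.sin w.im| ≤ Real.exp w.re * w.re :=
      mul_le_mul hcosh (le_trans Real.abs_sin_le_abs h) (abs_nonneg _) (Real.exp_pos _).le
    linarith
  linarith

/-- Difference of tanh. -/
lemma tanh_diff (A B : ℂ) (hA : Complex.cosh A ≠ 0) (hB : Complex.cosh B ≠ 0) :
    Complex.tanh A - Complex.tanh B = Complex.sinh (A - B) / (Complex.cosh A * Complex.cosh B) := by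
  rw [Complex.tanh_eq_sinh_div_cosh, Complex.tanh_eq_sinh_div_cosh, Complex.sinh_sub]
  field_simp

/-- Sector condition. -/
lemma sector_im (z : ℂ) (h : |z.arg| < Real.pi / 4) : |z.im| ≤ z.re := by
  by_cases hz : z = 0
  · simp [hz]
  · have hs := Complex.sin_arg z
    have hc := Complex.cos_arg hz
    set θ := z.arg with hθ
    have habs : |θ| < Real.pi / 4 := h
    have hpi := Real.pi_pos
    have hsin_le : |Real.sin θ| ≤ Real.cos θ := by
      rw [abs_lt] at habs
      rw [abs_le]
      constructor
      · -- -cos θ ≤ sin θ  i.e. 0 ≤ cos θ + sin θ = √2 cos (θ - π/4)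
        have h1 : Real.cos (θ - Real.pi / 4) =
            (Real.cos θ + Real.sin θ) * (Real.sqrt 2 / 2) := by
          rw [Real.cos_sub, Real.cos_pi_div_four, Real.sin_pi_div_four]; ring
        have h2 : 0 ≤ Real.cos (θ - Real.pi / 4) := by
          apply Real.cos_nonneg_of_mem_Icc
          constructor <;> linarith [habs.1, habs.2]
        have h3 : (0:ℝ) < Real.sqrt 2 / 2 := by positivity
        nlinarith
      · have h1 : Real.cos (θ + Real.pi / 4) =
            (Real.cos θ - Real.sin θ) * (Real.sqrt 2 / 2) := by
          rw [Real.cos_add, Real.cos_pi_div_four, Real.sin_pi_div_four]; ring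
        have h2 : 0 ≤ Real.cos (θ + Real.pi / 4) := by
          apply Real.cos_nonneg_of_mem_Icc
          constructor <;> linarith [habs.1, habs.2]
        have h3 : (0:ℝ) < Real.sqrt 2 / 2 := by positivity
        nlinarith
    have habspos : 0 < ‖z‖ := norm_pos_iff.mpr hz
    have him : z.im = ‖z‖ * Real.sin θ := by
      rw [hs]; field_simp
    have hre : z.re = ‖z‖ * Real.cos θ := by
      rw [hc]; field_simp
    rw [him, hre, abs_mul, abs_of_pos habspos]
    exact mul_le_mul_of_nonneg_left hsin_le habspos.le

theorem ga_continuous_in_a (a₀ : ℝ) (ha₀ : a₀ ∈ Set.Ioo (0:ℝ) 1) :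
    ∀ ε > 0, ∃ δ > 0, ∀ a ∈ Set.Ioo (0:ℝ) 1, |a - a₀| < δ →
      ∀ z : ℂ, |z.arg| < Real.pi / 4 →
        ‖z / (1 + z) * Complex.tanh ((a : ℂ) * z) -
          z / (1 + z) * Complex.tanh ((a₀ : ℂ) * z)‖ < ε := by
  obtain ⟨ha₀0, ha₀1⟩ := ha₀
  intro ε hε
  refine ⟨min (a₀ / 2) (ε * a₀ / 32), by positivity, ?_⟩
  intro a ⟨ha0, ha1⟩ had z hz
  set c := |a - a₀| with hc
  have hcδ1 : c < a₀ / 2 := lt_of_lt_of_le had (min_le_left _ _)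
  have hcδ2 : c < ε * a₀ / 32 := lt_of_lt_of_le had (min_le_right _ _)
  have haga : a₀ / 2 ≤ a := by
    rw [abs_sub_lt_iff] at hcδ1
    linarith [hcδ1.2]
  -- sector facts
  have hzim : |z.im| ≤ z.re := sector_im z hz
  have hzre : 0 ≤ z.re := le_trans (abs_nonneg _) hzim
  have hsect : ∀ t : ℝ, 0 ≤ t → |((t:ℂ) * z).im| ≤ ((t:ℂ) * z).re := by
    intro t ht
    simp only [Complex.mul_im, Complex.mul_re, Complex.ofReal_re, Complex.ofReal_im,
      zero_mul, mul_zero, sub_zero, add_zero, zero_add]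
    rw [abs_mul, abs_of_nonneg ht]
    exact mul_le_mul_of_nonneg_left hzim ht
  have hsa := hsect a ha0.le
  have hsa0 := hsect a₀ ha₀0.le
  have hca : Complex.cosh ((a:ℂ) * z) ≠ 0 := by
    intro h0
    have := cosh_lower _ hsa
    rw [h0] at this
    simp at this
    exact absurd this (not_le.mpr (Real.exp_pos _))
  have hca0 : Complex.cosh ((a₀:ℂ) * z) ≠ 0 := by
    intro h0
    have := cosh_lower _ hsa0
    rw [h0] at this
    simp at this
    exact absurd this (not_le.mpr (Real.exp_pos _))
  -- rewrite the difference
  have hre : ((a:ℂ) * z - (a₀:ℂ) * z) = ((a - a₀ : ℝ) : ℂ) * z := by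
    push_cast; ring
  have heq : z / (1 + z) * Complex.tanh ((a:ℂ) * z) - z / (1 + z) * Complex.tanh ((a₀:ℂ) * z)
      = z / (1 + z) * (Complex.sinh (((a - a₀ : ℝ):ℂ) * z) /
          (Complex.cosh ((a:ℂ) * z) * Complex.cosh ((a₀:ℂ) * z))) := by
    rw [← mul_sub, tanh_diff _ _ hca hca0, hre]
  rw [heq]
  -- bound on the Blaschke-type factor
  have hfac : ‖z / (1 + z)‖ ≤ 1 := by
    by_cases h0 : (1 : ℂ) + z = 0
    · simp [h0]
    · rw [norm_div]
      apply div_le_one_of_le₀ _ (norm_nonneg _)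
      rw [← Real.sqrt_sq (norm_nonneg z),
        ← Real.sqrt_sq (norm_nonneg (1 + z))]
      apply Real.sqrt_le_sqrt
      rw [Complex.sq_norm, Complex.sq_norm, Complex.normSq_apply, Complex.normSq_apply]
      simp only [Complex.add_re, Complex.add_im, Complex.one_re, Complex.one_im, zero_add]
      nlinarith
  -- norm of sinh term : reduce to |a - a₀|
  have hsinh_norm : ‖Complex.sinh (((a - a₀ : ℝ):ℂ) * z)‖ = ‖Complex.sinh ((c:ℂ) * z)‖ := by
    rcases abs_cases (a - a₀) with ⟨h1, _⟩ | ⟨h1, _⟩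
    · rw [hc, h1]
    · rw [hc, h1]
      have : ((-(a - a₀) : ℝ) : ℂ) * z = -(((a - a₀ : ℝ):ℂ) * z) := by push_cast; ring
      rw [this, Complex.sinh_neg, norm_neg]
  have hcnn : 0 ≤ c := abs_nonneg _
  have hsc := hsect c hcnn
  -- real parts
  have hra : ((a:ℂ) * z).re = a * z.re := by
    simp [Complex.mul_re]
  have hra0 : ((a₀:ℂ) * z).re = a₀ * z.re := by
    simp [Complex.mul_re]
  have hrc : ((c:ℂ) * z).re = c * z.re := by
    simp [Complex.mul_re]
  set X := z.re with hX
  -- numerator bound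
  have hnum : ‖Complex.sinh ((c:ℂ) * z)‖ ≤ 2 * (c * X) * Real.exp (c * X) := by
    have := sinh_upper _ hsc
    rwa [hrc] at this
  -- denominator bounds
  have hden1 : Real.exp (a * X) ≤ 4 * ‖Complex.cosh ((a:ℂ) * z)‖ := by
    have := cosh_lower _ hsa; rwa [hra] at this
  have hden2 : Real.exp (a₀ * X) ≤ 4 * ‖Complex.cosh ((a₀:ℂ) * z)‖ := by
    have := cosh_lower _ hsa0; rwa [hra0] at this
  have hnorm1 : (0:ℝ) < ‖Complex.cosh ((a:ℂ) * z)‖ := norm_pos_iff.mpr hca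
  have hnorm2 : (0:ℝ) < ‖Complex.cosh ((a₀:ℂ) * z)‖ := norm_pos_iff.mpr hca0
  -- assemble
  have hnd : ‖Complex.sinh (((a - a₀ : ℝ):ℂ) * z) /
      (Complex.cosh ((a:ℂ) * z) * Complex.cosh ((a₀:ℂ) * z))‖
      = ‖Complex.sinh ((c:ℂ) * z)‖ /
        (‖Complex.cosh ((a:ℂ) * z)‖ * ‖Complex.cosh ((a₀:ℂ) * z)‖) := by
    rw [norm_div, norm_mul, hsinh_norm]
  rw [norm_mul, hnd]
  have hkey : ‖Complex.sinh ((c:ℂ) * z)‖ /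
      (‖Complex.cosh ((a:ℂ) * z)‖ * ‖Complex.cosh ((a₀:ℂ) * z)‖) ≤ 32 * c / a₀ := by
    have hub : ‖Complex.sinh ((c:ℂ) * z)‖ ≤
        (2 * (c * X) * Real.exp (c * X)) := hnum
    have hlb : Real.exp (a * X) * Real.exp (a₀ * X) / 16 ≤
        ‖Complex.cosh ((a:ℂ) * z)‖ * ‖Complex.cosh ((a₀:ℂ) * z)‖ := by
      nlinarith [Real.exp_pos (a * X), Real.exp_pos (a₀ * X)]
    have hlbpos : (0:ℝ) < Real.exp (a * X) * Real.exp (a₀ * X) / 16 := by positivity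
    calc ‖Complex.sinh ((c:ℂ) * z)‖ /
        (‖Complex.cosh ((a:ℂ) * z)‖ * ‖Complex.cosh ((a₀:ℂ) * z)‖)
        ≤ (2 * (c * X) * Real.exp (c * X)) / (Real.exp (a * X) * Real.exp (a₀ * X) / 16) := by
          apply div_le_div₀ (by positivity) hub hlbpos hlb
      _ = 32 * c * (X * Real.exp (c * X - a * X - a₀ * X)) := by
          rw [Real.exp_sub, Real.exp_sub]
          field_simp
          ring
      _ ≤ 32 * c * (X * Real.exp (-(a₀ * X))) := by
          apply mul_le_mul_of_nonneg_left _ (by positivity)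
          apply mul_le_mul_of_nonneg_left _ hzre
          apply Real.exp_le_exp.mpr
          have hac : 0 ≤ (a - c) * X := mul_nonneg (by linarith) hzre
          linarith
      _ ≤ 32 * c * (1 / a₀) := by
          apply mul_le_mul_of_nonneg_left _ (by positivity)
          rw [le_div_iff₀ ha₀0]
          have h1 : a₀ * X + 1 ≤ Real.exp (a₀ * X) := Real.add_one_le_exp _
          have h2 : Real.exp (-(a₀ * X)) * Real.exp (a₀ * X) = 1 := by
            rw [← Real.exp_add]; simp
          nlinarith [Real.exp_pos (-(a₀ * X)), Real.exp_pos (a₀ * X), mul_nonneg ha₀0.le hzre]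
      _ = 32 * c / a₀ := by field_simp
  calc ‖z / (1 + z)‖ * (‖Complex.sinh ((c:ℂ) * z)‖ /
        (‖Complex.cosh ((a:ℂ) * z)‖ * ‖Complex.cosh ((a₀:ℂ) * z)‖))
      ≤ 1 * (32 * c / a₀) := by
        apply mul_le_mul hfac hkey (by positivity) zero_le_one
    _ = 32 * c / a₀ := one_mul _
    _ < ε := by
        rw [div_lt_iff₀ ha₀0]
        nlinarith
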